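/- Suppose G is a finite simple graph of order n such that every connected component of G and of its complement Ḡ has at least 3 vertices and γ_P(G) = n/3. Then γ_P(Ḡ) ≤ 2. If, in addition, G has a connected component of order at least 6 that belongs to the family T, then γ_P(Ḡ) = 1. -/

import Mathlib

/-- The set of observed vertices in the power domination process started from `S`:
initially `N[S]` (the closed neighborhood of `S`), and while some observed vertex `v`
has exactly one unobserved neighbor `w`, `w` becomes observed. -/
inductive SimpleGraph.Observed {V : Type*} (G : SimpleGraph V) (S : Set V) : V → Prop
  | mem : ∀ v ∈ S, SimpleGraph.Observed G S v
  | dominate : ∀ v ∈ S, ∀ w, G.Adj v w → SimpleGraph.Observed G S w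
  | force : ∀ v w, SimpleGraph.Observed G S v → G.Adj v w →
      (∀ u, G.Adj v u → u ≠ w → SimpleGraph.Observed G S u) → SimpleGraph.Observed G S w

/-- `S` is a power dominating set of `G` if every vertex becomes observed. -/
def SimpleGraph.IsPowerDominating {V : Type*} (G : SimpleGraph V) (S : Set V) : Prop :=
  ∀ v, G.Observed S v

/-- The power domination number: minimum cardinality of a power dominating set. -/
noncomputable def SimpleGraph.powerDomNum {V : Type*} (G : SimpleGraph V) : ℕ :=
  sInf {k | ∃ S : Finset V, S.card = k ∧ G.IsPowerDominating ↑S}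

/-- `S` is a dominating set of `G` if `N[S] = V`. -/
def SimpleGraph.IsDominating {V : Type*} (G : SimpleGraph V) (S : Set V) : Prop :=
  ∀ v, v ∈ S ∨ ∃ u ∈ S, G.Adj u v

/-- The domination number: minimum cardinality of a dominating set. -/
noncomputable def SimpleGraph.domNum {V : Type*} (G : SimpleGraph V) : ℕ :=
  sInf {k | ∃ S : Finset V, S.card = k ∧ G.IsDominating ↑S}

/-- The minimum degree `δ(G)`. -/
noncomputable def SimpleGraph.minDeg {V : Type*} (G : SimpleGraph V) : ℕ :=
  sInf (Set.range fun v => (G.neighborSet v).ncard)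

/-- The vertex connectivity `κ(G)`: the minimum cardinality of a set `S` of vertices
such that removing `S` disconnects `G` (leaves a non-preconnected graph) or leaves
at most one vertex.  In particular `κ(Kₙ) = n - 1` and `κ(G) = 0` for disconnected `G`. -/
noncomputable def SimpleGraph.vertexConn {V : Type*} (G : SimpleGraph V) [Fintype V] : ℕ :=
  sInf {k | ∃ S : Finset V, S.card = k ∧
    (¬ (G.induce ((↑S : Set V)ᶜ)).Preconnected ∨ Fintype.card V ≤ S.card + 1)}

/-- The edge connectivity `λ(G)`: the minimum cardinality of a set of edges of `G`
whose removal disconnects `G`. -/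
noncomputable def SimpleGraph.edgeConn {V : Type*} (G : SimpleGraph V) : ℕ :=
  sInf {k | ∃ F : Finset (Sym2 V), ↑F ⊆ G.edgeSet ∧ F.card = k ∧
    ¬ (G.deleteEdges ↑F).Preconnected}

/-- `G` is super-λ: `G` is maximally connected (`κ(G) = λ(G) = δ(G)`) and every
minimum edge-cut is trivial, i.e. consists of all edges incident with a single vertex. -/
def SimpleGraph.IsSuperLambda {V : Type*} (G : SimpleGraph V) [Fintype V] : Prop :=
  G.vertexConn = G.edgeConn ∧ G.edgeConn = G.minDeg ∧
  ∀ F : Finset (Sym2 V), ↑F ⊆ G.edgeSet → ¬ (G.deleteEdges ↑F).Preconnected →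
    F.card = G.edgeConn → ∃ v : V, (↑F : Set (Sym2 V)) = {e ∈ G.edgeSet | v ∈ e}

/-- The family `T`: graphs obtained from a connected graph `H` (the induced graph on `A`)
by adding, for each vertex `a` of `H`, two new vertices `p a` and `q a`, each adjacent to
`a` and possibly to each other, but to no other vertices. -/
def SimpleGraph.InFamilyT {W : Type*} (K : SimpleGraph W) : Prop :=
  ∃ (A : Set W) (p q : A → W),
    (∀ a, p a ∉ A) ∧ (∀ a, q a ∉ A) ∧
    Function.Injective p ∧ Function.Injective q ∧
    (∀ a b, p a ≠ q b) ∧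
    (∀ w, w ∉ A → ∃ a, w = p a ∨ w = q a) ∧
    (K.induce A).Connected ∧
    (∀ a : A, K.Adj (p a) ↑a ∧ K.Adj (q a) ↑a ∧
      (∀ w, K.Adj (p a) w → w = ↑a ∨ w = q a) ∧
      (∀ w, K.Adj (q a) w → w = ↑a ∨ w = p a))

section PDHelpers

variable {V : Type*}

private lemma pd_obs_empty_false {G : SimpleGraph V} {v : V} (h : G.Observed ∅ v) : False := by
  induction h with
  | mem v hv => exact hv
  | dominate v hv w _ => exact hv
  | force v w _ _ _ ih _ => exact ih

private lemma pds_of_dominating {G : SimpleGraph V} (S : Finset V)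
    (h : ∀ v, v ∈ S ∨ ∃ x ∈ S, G.Adj x v) : G.IsPowerDominating ↑S := by
  intro v
  rcases h v with hv | ⟨x, hx, hadj⟩
  · exact SimpleGraph.Observed.mem v (by simpa using hv)
  · exact SimpleGraph.Observed.dominate x (by simpa using hx) v hadj

private lemma exists_adj_of_reachable_ne {G : SimpleGraph V} {v w : V}
    (h : G.Reachable v w) (hne : v ≠ w) : ∃ x, G.Adj v x := by
  obtain ⟨p⟩ := h
  cases p with
  | nil => exact absurd rfl hne
  | cons h _ => exact ⟨_, h⟩

private lemma maxdeg2_observed [Finite V] {H : SimpleGraph V}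
    (hdeg : ∀ v, (H.neighborSet v).ncard ≤ 2) {S : Set V} {v0 : V} (hv0 : v0 ∈ S) :
    ∀ (r : ℕ) (w : V), H.Reachable v0 w → H.dist v0 w = r → H.Observed S w := by
  intro r
  induction r using Nat.strong_induction_on with
  | _ r ih =>
    intro w hreach hdist
    rcases Nat.eq_zero_or_pos r with rfl | hrpos
    · have : v0 = w := (hreach.dist_eq_zero_iff).mp hdist
      exact this ▸ SimpleGraph.Observed.mem v0 hv0
    obtain ⟨p, hp⟩ := hreach.exists_walk_length_eq_dist
    rw [hdist] at hp
    have hpn : ¬ p.reverse.Nil := by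
      rw [SimpleGraph.Walk.not_nil_iff_lt_length, SimpleGraph.Walk.length_reverse]; omega
    obtain ⟨x, hxw, q, hq⟩ := SimpleGraph.Walk.not_nil_iff.mp hpn
    have hqlen : q.length + 1 = r := by
      have h' := congrArg SimpleGraph.Walk.length hq
      rw [SimpleGraph.Walk.length_reverse, hp] at h'
      simpa using h'.symm
    by_cases hxv : x = v0
    · rw [hxv] at hxw
      exact SimpleGraph.Observed.dominate v0 hv0 w hxw.symm
    have hreach_x : H.Reachable v0 x := ⟨q.reverse⟩
    have hdx_le : H.dist v0 x ≤ r - 1 := by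
      have h' := SimpleGraph.dist_le q.reverse
      rw [SimpleGraph.Walk.length_reverse] at h'
      omega
    have hobs_x : H.Observed S x := ih (H.dist v0 x) (by omega) x hreach_x rfl
    obtain ⟨p2, hp2⟩ := hreach_x.exists_walk_length_eq_dist
    have hdxpos : H.dist v0 x ≠ 0 := by
      rw [SimpleGraph.dist_ne_zero_iff_ne_and_reachable]
      exact ⟨fun h => hxv h.symm, hreach_x⟩
    have hp2n : ¬ p2.reverse.Nil := by
      rw [SimpleGraph.Walk.not_nil_iff_lt_length, SimpleGraph.Walk.length_reverse]; omega
    obtain ⟨y, hxy, q2, hq2⟩ := SimpleGraph.Walk.not_nil_iff.mp hp2n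
    have hq2len : q2.length + 1 = H.dist v0 x := by
      have h' := congrArg SimpleGraph.Walk.length hq2
      rw [SimpleGraph.Walk.length_reverse, hp2] at h'
      simpa using h'.symm
    have hdy : H.dist v0 y ≤ r - 2 := by
      have h' := SimpleGraph.dist_le q2.reverse
      rw [SimpleGraph.Walk.length_reverse] at h'
      omega
    have hobs_y : H.Observed S y := ih (H.dist v0 y) (by omega) y ⟨q2.reverse⟩ rfl
    have hyw : y ≠ w := by
      intro h
      rw [h] at hdy
      omega
    refine SimpleGraph.Observed.force x w hobs_x hxw.symm ?_
    intro z hz hzw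
    by_cases hzy : z = y
    · exact hzy ▸ hobs_y
    · exfalso
      have hsub : ({w, y, z} : Set V) ⊆ H.neighborSet x := by
        intro t ht
        simp only [Set.mem_insert_iff, Set.mem_singleton_iff] at ht
        rcases ht with rfl | rfl | rfl
        · exact hxw.symm
        · exact hxy
        · exact hz
      have h3 : ({w, y, z} : Set V).ncard = 3 := by
        rw [Set.ncard_insert_of_notMem (by simp [hyw.symm, Ne.symm hzw]) (Set.toFinite _),
          Set.ncard_pair (fun h => hzy h.symm)]
      have hle := Set.ncard_le_ncard hsub (Set.toFinite _)
      rw [h3] at hle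
      have := hdeg x
      omega

end PDHelpers

section PDGreedy

variable {V : Type*}

private def pdBu : ℕ → ℕ
  | 0 => 0
  | s+1 => 3 * pdBu s / 2 + 1

private lemma pdBu_ge : ∀ j : ℕ, 24 + 3 * j ≤ pdBu (7 + j) := by
  intro j
  induction j with
  | zero => show 24 ≤ pdBu 7; norm_num [pdBu]
  | succ j ih =>
    have h : pdBu (7 + (j+1)) = 3 * pdBu (7 + j) / 2 + 1 := rfl
    omega

private def pdB4 : ℕ → ℕ | 0 => 0 | 1 => 1 | 2 => 4 | _+3 => 12
private def pdB5 : ℕ → ℕ | 0 => 0 | 1 => 2 | 2 => 6 | _+3 => 15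
private def pdB6 : ℕ → ℕ | 0 => 0 | 1 => 1 | 2 => 3 | 3 => 8 | _+4 => 18
private def pdB7 : ℕ → ℕ | 0 => 0 | 1 => 1 | 2 => 4 | 3 => 10 | _+4 => 21

private lemma greedy_avg [Fintype V] {G : SimpleGraph V} [DecidableEq V] [DecidableRel G.Adj]
    {k : ℕ} (hk : 1 ≤ k) (hcard : Fintype.card V = 3 * k)
    (hdeg : ∀ v, k + 3 ≤ (G.neighborFinset v).card)
    (U : Finset V) :
    ∃ x : V, (k + 4) * U.card ≤ 3 * k * (U.filter fun v => v = x ∨ G.Adj x v).card := by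
  have hVne : Nonempty V := by
    rw [← Fintype.card_pos_iff]; omega
  by_contra hcon
  push_neg at hcon
  have hsum : ∑ x : V, (U.filter fun v => v = x ∨ G.Adj x v).card
      = ∑ v ∈ U, (Finset.univ.filter fun x : V => v = x ∨ G.Adj x v).card := by
    simp only [Finset.card_filter]
    rw [Finset.sum_comm]
  have hinner : ∀ v : V, (Finset.univ.filter fun x : V => v = x ∨ G.Adj x v).card
      = (G.neighborFinset v).card + 1 := by
    intro v
    have : (Finset.univ.filter fun x : V => v = x ∨ G.Adj x v)
        = insert v (G.neighborFinset v) := by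
      ext x
      simp only [Finset.mem_filter, Finset.mem_univ, true_and, Finset.mem_insert,
        SimpleGraph.mem_neighborFinset]
      constructor
      · rintro (rfl | h)
        · exact Or.inl rfl
        · exact Or.inr h.symm
      · rintro (rfl | h)
        · exact Or.inl rfl
        · exact Or.inr h.symm
    rw [this, Finset.card_insert_of_notMem (by simp)]
  have hlow : (k + 4) * U.card ≤ ∑ x : V, (U.filter fun v => v = x ∨ G.Adj x v).card := by
    rw [hsum]
    calc (k + 4) * U.card = ∑ _v ∈ U, (k + 4) := by
          rw [Finset.sum_const, smul_eq_mul, mul_comm]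
      _ ≤ _ := by
          apply Finset.sum_le_sum
          intro v _
          rw [hinner v]
          have := hdeg v
          omega
  have hup : ∀ x : V, 3 * k * (U.filter fun v => v = x ∨ G.Adj x v).card + 1 ≤ (k+4) * U.card :=
    fun x => hcon x
  have hbig : 3 * k * ∑ x : V, (U.filter fun v => v = x ∨ G.Adj x v).card + Fintype.card V
      ≤ Fintype.card V * ((k+4) * U.card) := by
    rw [Finset.mul_sum]
    calc (∑ x : V, 3 * k * (U.filter fun v => v = x ∨ G.Adj x v).card) + Fintype.card V
        = ∑ x : V, (3 * k * (U.filter fun v => v = x ∨ G.Adj x v).card + 1) := by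
          rw [Finset.sum_add_distrib]
          simp [Finset.card_univ]
      _ ≤ ∑ _x : V, (k+4) * U.card := Finset.sum_le_sum (fun x _ => hup x)
      _ = Fintype.card V * ((k+4) * U.card) := by
          rw [Finset.sum_const, smul_eq_mul, Finset.card_univ]
  rw [hcard] at hbig
  have hmul := Nat.mul_le_mul_left (3 * k) hlow
  omega

private lemma greedy_dom [Fintype V] {G : SimpleGraph V} [DecidableEq V] [DecidableRel G.Adj]
    {k : ℕ} (hk : 1 ≤ k) (hcard : Fintype.card V = 3 * k)
    (hdeg : ∀ v, k + 3 ≤ (G.neighborFinset v).card)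
    (B : ℕ → ℕ) (hB0 : B 0 = 0)
    (hB : ∀ s m cov, m ≤ B (s+1) → 1 ≤ m → (k+4) * m ≤ 3 * k * cov → m - cov ≤ B s) :
    ∀ (s : ℕ) (U : Finset V), U.card ≤ B s →
      ∃ S : Finset V, S.card ≤ s ∧ ∀ v ∈ U, v ∈ S ∨ ∃ x ∈ S, G.Adj x v := by
  intro s
  induction s with
  | zero =>
    intro U hU
    refine ⟨∅, le_refl _, ?_⟩
    have : U = ∅ := Finset.card_eq_zero.mp (by omega)
    subst this
    simp
  | succ s ih =>
    intro U hU
    rcases U.eq_empty_or_nonempty with rfl | hne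
    · exact ⟨∅, by simp, by simp⟩
    obtain ⟨x, hx⟩ := greedy_avg hk hcard hdeg U
    set U' := U.filter (fun v => ¬(v = x ∨ G.Adj x v)) with hU'def
    have hcards : (U.filter fun v => v = x ∨ G.Adj x v).card + U'.card = U.card :=
      Finset.card_filter_add_card_filter_not _
    have hU'le : U'.card ≤ B s := by
      have h1 : 1 ≤ U.card := Finset.card_pos.mpr hne
      have := hB s U.card (U.filter fun v => v = x ∨ G.Adj x v).card hU h1 hx
      omega
    obtain ⟨S, hS, hdomS⟩ := ih U' hU'le
    refine ⟨insert x S, ?_, ?_⟩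
    · have := Finset.card_insert_le x S
      omega
    · intro v hv
      by_cases hvx : v = x ∨ G.Adj x v
      · rcases hvx with rfl | ha
        · exact Or.inl (Finset.mem_insert_self _ _)
        · exact Or.inr ⟨x, Finset.mem_insert_self _ _, ha⟩
      · rcases hdomS v (Finset.mem_filter.mpr ⟨hv, hvx⟩) with h | ⟨y, hy, hya⟩
        · exact Or.inl (Finset.mem_insert_of_mem h)
        · exact Or.inr ⟨y, Finset.mem_insert_of_mem hy, hya⟩

end PDGreedy

section PDConstruct

variable {V : Type*}

private lemma pd_ck2 : ∀ j : ℕ, 2 * j + 1 ≤ (j + 2).choose 2 := by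
  intro j
  induction j with
  | zero => simp
  | succ j ih =>
    have h : (j + 3).choose 2 = (j+2).choose 1 + (j+2).choose 2 := Nat.choose_succ_succ _ _
    rw [Nat.choose_one_right] at h
    rw [show j + 1 + 2 = j + 3 by omega]
    omega

private lemma pd_ck3 : ∀ j : ℕ, j * j ≤ (j + 2).choose 3 := by
  intro j
  induction j with
  | zero => simp
  | succ j ih =>
    have h : (j + 3).choose 3 = (j+2).choose 2 + (j+2).choose 3 := Nat.choose_succ_succ _ _
    have h2 := pd_ck2 j
    have hexp : (j+1) * (j+1) = j * j + 2 * j + 1 := by ring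
    rw [show j + 1 + 2 = j + 3 by omega, hexp]
    omega

private lemma pd_card_supersets_le [DecidableEq V] (Nu Cz : Finset V) (hsub : Cz ⊆ Nu)
    (h2 : 2 ≤ Cz.card) :
    ((Nu.powersetCard 3).filter fun X => Cz ⊆ X).card ≤ (Nu.card - Cz.card) + 1 := by
  classical
  set T : Finset (Finset V) := insert ∅ ((Nu \ Cz).image fun w => {w}) with hT
  have hTcard : T.card ≤ (Nu.card - Cz.card) + 1 := by
    calc T.card ≤ ((Nu \ Cz).image fun w => ({w} : Finset V)).card + 1 :=
          Finset.card_insert_le _ _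
      _ ≤ (Nu \ Cz).card + 1 := by
          have := Finset.card_image_le (s := Nu \ Cz) (f := fun w => ({w} : Finset V))
          omega
      _ ≤ (Nu.card - Cz.card) + 1 := by
          rw [Finset.card_sdiff_of_subset hsub]
  have hmain : ((Nu.powersetCard 3).filter fun X => Cz ⊆ X).card ≤ T.card := by
    apply Finset.card_le_card_of_injOn (fun X => X \ Cz)
    · intro X hX
      simp only [Finset.mem_coe, Finset.mem_filter, Finset.mem_powersetCard] at hX ⊢
      obtain ⟨⟨hXNu, hX3⟩, hCzX⟩ := hX
      have hc : (X \ Cz).card = 3 - Cz.card := by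
        rw [Finset.card_sdiff_of_subset hCzX, hX3]
      have hle : (X \ Cz).card ≤ 1 := by omega
      rcases Nat.le_one_iff_eq_zero_or_eq_one.mp hle with h0 | h1
      · have : X \ Cz = ∅ := Finset.card_eq_zero.mp h0
        rw [this, hT]
        exact Finset.mem_insert_self _ _
      · obtain ⟨w, hw⟩ := Finset.card_eq_one.mp h1
        rw [hw, hT]
        apply Finset.mem_insert_of_mem
        apply Finset.mem_image_of_mem
        have hwmem : w ∈ X \ Cz := by rw [hw]; exact Finset.mem_singleton_self w
        rw [Finset.mem_sdiff] at hwmem ⊢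
        exact ⟨hXNu hwmem.1, hwmem.2⟩
    · intro X hX Y hY hXY
      simp only [Finset.coe_filter, Set.mem_setOf_eq, Finset.mem_powersetCard] at hX hY
      have hXY' : X \ Cz = Y \ Cz := hXY
      have h5 : X \ Cz ∪ Cz = Y \ Cz ∪ Cz := by rw [hXY']
      rwa [Finset.sdiff_union_of_subset hX.2, Finset.sdiff_union_of_subset hY.2] at h5
  omega

private lemma pd_card_filter_mem_le_one [DecidableEq V] (Nu Cz : Finset V) {z : V}
    (hz : z ∉ Cz) (h2 : 2 ≤ Cz.card) :
    ((Nu.powersetCard 3).filter fun X => z ∈ X ∧ Cz ⊆ X).card ≤ 1 := by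
  apply Finset.card_le_one.mpr
  intro X hX Y hY
  simp only [Finset.mem_filter, Finset.mem_powersetCard] at hX hY
  obtain ⟨⟨hXNu, hX3⟩, hzX, hCzX⟩ := hX
  obtain ⟨⟨hYNu, hY3⟩, hzY, hCzY⟩ := hY
  have hsubX : insert z Cz ⊆ X := Finset.insert_subset hzX hCzX
  have hsubY : insert z Cz ⊆ Y := Finset.insert_subset hzY hCzY
  have hci : (insert z Cz).card = Cz.card + 1 := Finset.card_insert_of_notMem hz
  have hX' : X = insert z Cz := by
    apply (Finset.eq_of_subset_of_card_le hsubX ?_).symm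
    omega
  have hY' : Y = insert z Cz := by
    apply (Finset.eq_of_subset_of_card_le hsubY ?_).symm
    omega
  rw [hX', hY']

private lemma pds_construct [Fintype V] {G : SimpleGraph V} [DecidableEq V]
    [DecidableRel G.Adj] (u : V) (X : Finset V) (hX : X ⊆ G.neighborFinset u)
    (hD : (G.neighborFinset u \ X).Nonempty)
    (hCN : ∀ z : V, z ≠ u → 2 ≤ (G.neighborFinset z ∩ G.neighborFinset u).card)
    (hW : ∀ z z' : V,
      (z ≠ u ∧ z ∉ G.neighborFinset u \ X ∧ G.neighborFinset z ∩ G.neighborFinset u ⊆ X) →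
      (z' ≠ u ∧ z' ∉ G.neighborFinset u \ X ∧ G.neighborFinset z' ∩ G.neighborFinset u ⊆ X) →
      z = z') :
    G.IsPowerDominating ↑(G.neighborFinset u \ X) := by
  classical
  obtain ⟨y0, hy0⟩ := hD
  have hyadj : G.Adj u y0 := by
    have h := (Finset.mem_sdiff.mp hy0).1
    rwa [SimpleGraph.mem_neighborFinset] at h
  have hu_obs : G.Observed ↑(G.neighborFinset u \ X) u :=
    SimpleGraph.Observed.dominate y0 (by simpa using hy0) u hyadj.symm
  have hdom : ∀ v : V, ¬ (G.neighborFinset v ∩ G.neighborFinset u ⊆ X) →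
      G.Observed ↑(G.neighborFinset u \ X) v := by
    intro v hv
    obtain ⟨w, hwmem, hwX⟩ := Finset.not_subset.mp hv
    have hwD : w ∈ G.neighborFinset u \ X :=
      Finset.mem_sdiff.mpr ⟨(Finset.mem_inter.mp hwmem).2, hwX⟩
    have hadj : G.Adj v w := by
      have h := (Finset.mem_inter.mp hwmem).1
      rwa [SimpleGraph.mem_neighborFinset] at h
    exact SimpleGraph.Observed.dominate w (by simpa using hwD) v hadj.symm
  intro v
  by_cases hvu : v = u
  · exact hvu ▸ hu_obs
  by_cases hvD : v ∈ G.neighborFinset u \ X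
  · exact SimpleGraph.Observed.mem v (by simpa using hvD)
  by_cases hvX : G.neighborFinset v ∩ G.neighborFinset u ⊆ X
  · have hv2 := hCN v hvu
    have hCne : (G.neighborFinset v ∩ G.neighborFinset u).Nonempty :=
      Finset.card_pos.mp (by omega)
    obtain ⟨y, hy⟩ := hCne
    have hyAdjv : G.Adj v y := by
      have h := (Finset.mem_inter.mp hy).1
      rwa [SimpleGraph.mem_neighborFinset] at h
    have hyu : y ≠ u := by
      intro h
      have h' := (Finset.mem_inter.mp hy).2
      rw [h] at h'
      simp at h'
    have hyX : y ∈ X := hvX hy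
    have hyD : y ∉ G.neighborFinset u \ X := by simp [hyX]
    have hyNX : ¬ (G.neighborFinset y ∩ G.neighborFinset u ⊆ X) := by
      intro hcon
      exact hyAdjv.ne (hW v y ⟨hvu, hvD, hvX⟩ ⟨hyu, hyD, hcon⟩)
    have hy_obs := hdom y hyNX
    refine SimpleGraph.Observed.force y v hy_obs hyAdjv.symm ?_
    intro w hwadj hwv
    by_cases hwu : w = u
    · exact hwu ▸ hu_obs
    by_cases hwD : w ∈ G.neighborFinset u \ X
    · exact SimpleGraph.Observed.mem w (by simpa using hwD)
    by_cases hwX : G.neighborFinset w ∩ G.neighborFinset u ⊆ X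
    · exact absurd (hW w v ⟨hwu, hwD, hwX⟩ ⟨hvu, hvD, hvX⟩) hwv
    · exact hdom w hwX
  · exact hdom v hvX

end PDConstruct

section PDPart2

variable {V : Type*}

private lemma pd_part2 [Fintype V] (G : SimpleGraph V)
    (c : G.ConnectedComponent) (h6 : 6 ≤ c.supp.ncard)
    (hT : (G.induce c.supp).InFamilyT) : Gᶜ.powerDomNum = 1 := by
  classical
  obtain ⟨A, p, q, hpA, hqA, hpI, hqI, hpq, hcov, hconn, hadj⟩ := hT
  -- `A` has at least two elements
  have hAcard : 2 ≤ Nat.card A := by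
    have hcover : (Set.univ : Set c.supp) ⊆ A ∪ Set.range p ∪ Set.range q := by
      intro w _
      by_cases hw : w ∈ A
      · exact Or.inl (Or.inl hw)
      · obtain ⟨a, ha⟩ := hcov w hw
        rcases ha with h | h
        · exact Or.inl (Or.inr ⟨a, h.symm⟩)
        · exact Or.inr ⟨a, h.symm⟩
    have h1 : c.supp.ncard = (Set.univ : Set c.supp).ncard := by
      rw [Set.ncard_univ, Nat.card_coe_set_eq]
    have h2 : (Set.univ : Set c.supp).ncard ≤ (A ∪ Set.range p ∪ Set.range q).ncard :=
      Set.ncard_le_ncard hcover (Set.toFinite _)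
    have h3 : (A ∪ Set.range p ∪ Set.range q).ncard
        ≤ A.ncard + (Set.range p).ncard + (Set.range q).ncard := by
      calc (A ∪ Set.range p ∪ Set.range q).ncard
          ≤ (A ∪ Set.range p).ncard + (Set.range q).ncard := Set.ncard_union_le _ _
        _ ≤ A.ncard + (Set.range p).ncard + (Set.range q).ncard := by
            have := Set.ncard_union_le A (Set.range p); omega
    have hrp : (Set.range p).ncard ≤ Nat.card A := by
      rw [← Set.image_univ]
      calc (p '' Set.univ).ncard ≤ (Set.univ : Set A).ncard :=
            Set.ncard_image_le (Set.toFinite _)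
        _ = Nat.card A := by rw [Set.ncard_univ]
    have hrq : (Set.range q).ncard ≤ Nat.card A := by
      rw [← Set.image_univ]
      calc (q '' Set.univ).ncard ≤ (Set.univ : Set A).ncard :=
            Set.ncard_image_le (Set.toFinite _)
        _ = Nat.card A := by rw [Set.ncard_univ]
    have hA : A.ncard = Nat.card A := (Nat.card_coe_set_eq A).symm
    omega
  have hnt : Nontrivial A := Finite.one_lt_card_iff_nontrivial.mp (by omega)
  obtain ⟨a₀, b, hab⟩ := hnt.exists_pair_ne
  have hreach := hconn.preconnected a₀ b
  obtain ⟨a', ha'⟩ := exists_adj_of_reachable_ne hreach hab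
  -- key vertices, as elements of `V`
  set va : V := (↑(↑a₀ : c.supp) : V) with hva
  set vqa : V := (↑(q a₀) : V) with hvqa
  set v0 : V := (↑(p a₀) : V) with hv0
  set x₁ : V := (↑(↑a' : c.supp) : V) with hx₁
  set x₂ : V := (↑(p b) : V) with hx₂
  -- basic adjacency facts in G
  have hGa' : G.Adj va x₁ := ha'
  have hGpa : G.Adj v0 va := (hadj a₀).1
  have hGqa : G.Adj vqa va := (hadj a₀).2.1
  -- injectivity of subtype coercion
  have hval : ∀ x y : c.supp, (↑x : V) = ↑y → x = y := fun x y h => Subtype.ext h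
  have hvalA : ∀ x y : A, (↑x : c.supp) = ↑y → x = y := fun x y h => Subtype.ext h
  -- distinctness facts
  have hne_v0_va : v0 ≠ va := fun h => hpA a₀ (by rw [hval _ _ h]; exact a₀.2)
  have hne_vqa_va : vqa ≠ va := by
    intro h
    exact hqA a₀ (by rw [hval _ _ h]; exact a₀.2)
  have hne_v0_vqa : v0 ≠ vqa := fun h => hpq a₀ a₀ (hval _ _ h)
  have hv0supp : G.connectedComponentMk v0 = c :=
    (SimpleGraph.ConnectedComponent.mem_supp_iff _ _).mp (p a₀).2
  have f1 : ∀ x : V, G.Adj v0 x → x = va ∨ x = vqa := by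
    intro x hx
    have hxsupp : x ∈ c.supp := by
      rw [SimpleGraph.ConnectedComponent.mem_supp_iff, ← hv0supp]
      exact SimpleGraph.ConnectedComponent.sound hx.symm.reachable
    have hK : (G.induce c.supp).Adj (p a₀) ⟨x, hxsupp⟩ := hx
    rcases (hadj a₀).2.2.1 ⟨x, hxsupp⟩ hK with h | h
    · exact Or.inl (congrArg Subtype.val h)
    · exact Or.inr (congrArg Subtype.val h)
  have step0 : ∀ x : V, x ≠ v0 → x ≠ va → x ≠ vqa →
      Gᶜ.Observed (↑({v0} : Finset V)) x := by
    intro x h0 hxva hxqa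
    by_cases hadjx : G.Adj v0 x
    · rcases f1 x hadjx with h | h
      · exact absurd h hxva
      · exact absurd h hxqa
    · exact SimpleGraph.Observed.dominate v0 (by simp) x
        ((G.compl_adj v0 x).mpr ⟨Ne.symm h0, hadjx⟩)
  have hane : a' ≠ a₀ := fun h => (ha'.ne (h ▸ rfl)).elim
  have hx₁_ne_v0 : x₁ ≠ v0 := by
    intro h
    exact hpA a₀ (by rw [← hval _ _ h]; exact a'.2)
  have hx₁_ne_va : x₁ ≠ va := by
    intro h
    exact hane (hvalA _ _ (hval _ _ h))
  have hx₁_ne_vqa : x₁ ≠ vqa := by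
    intro h
    exact hqA a₀ (by rw [← hval _ _ h]; exact a'.2)
  have hnGx₁vqa : ¬ G.Adj x₁ vqa := by
    intro hGx
    have hK : (G.induce c.supp).Adj (q a₀) (↑a' : c.supp) := hGx.symm
    rcases (hadj a₀).2.2.2 (↑a' : c.supp) hK with h | h
    · exact hane (hvalA _ _ h)
    · exact hpA a₀ (by rw [← h]; exact a'.2)
  have hobs_x₁ : Gᶜ.Observed (↑({v0} : Finset V)) x₁ :=
    step0 x₁ hx₁_ne_v0 hx₁_ne_va hx₁_ne_vqa
  have hforce1 : Gᶜ.Observed (↑({v0} : Finset V)) vqa := by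
    refine SimpleGraph.Observed.force x₁ vqa hobs_x₁
      ((G.compl_adj x₁ vqa).mpr ⟨hx₁_ne_vqa, hnGx₁vqa⟩) ?_
    intro y hy hyne
    by_cases hy0 : y = v0
    · rw [hy0]; exact SimpleGraph.Observed.mem v0 (by simp)
    by_cases hyva : y = va
    · exfalso
      rw [hyva] at hy
      exact ((G.compl_adj x₁ va).mp hy).2 hGa'.symm
    · exact step0 y hy0 hyva hyne
  have hx₂_ne_v0 : x₂ ≠ v0 := by
    intro h
    exact (Ne.symm hab) (hpI (hval _ _ h))
  have hx₂_ne_va : x₂ ≠ va := by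
    intro h
    exact hpA b (by rw [hval _ _ h]; exact a₀.2)
  have hx₂_ne_vqa : x₂ ≠ vqa := fun h => hpq b a₀ (hval _ _ h)
  have hnGx₂va : ¬ G.Adj x₂ va := by
    intro hGx
    have hK : (G.induce c.supp).Adj (p b) (↑a₀ : c.supp) := hGx
    rcases (hadj b).2.2.1 (↑a₀ : c.supp) hK with h | h
    · exact hab (hvalA _ _ h)
    · exact hqA b (by rw [← h]; exact a₀.2)
  have hobs_x₂ : Gᶜ.Observed (↑({v0} : Finset V)) x₂ :=
    step0 x₂ hx₂_ne_v0 hx₂_ne_va hx₂_ne_vqa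
  have hforce2 : Gᶜ.Observed (↑({v0} : Finset V)) va := by
    refine SimpleGraph.Observed.force x₂ va hobs_x₂
      ((G.compl_adj x₂ va).mpr ⟨hx₂_ne_va, hnGx₂va⟩) ?_
    intro y hy hyne
    by_cases hy0 : y = v0
    · rw [hy0]; exact SimpleGraph.Observed.mem v0 (by simp)
    by_cases hyqa : y = vqa
    · rw [hyqa]; exact hforce1
    · exact step0 y hy0 hyne hyqa
  have hpds : Gᶜ.IsPowerDominating (↑({v0} : Finset V)) := by
    intro v
    by_cases h0 : v = v0
    · rw [h0]; exact SimpleGraph.Observed.mem v0 (by simp)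
    by_cases hva' : v = va
    · rw [hva']; exact hforce2
    by_cases hqa' : v = vqa
    · rw [hqa']; exact hforce1
    · exact step0 v h0 hva' hqa'
  have hle : Gᶜ.powerDomNum ≤ 1 :=
    Nat.sInf_le ⟨{v0}, Finset.card_singleton _, hpds⟩
  have hnonempty : {n | ∃ S : Finset V, S.card = n ∧ Gᶜ.IsPowerDominating ↑S}.Nonempty :=
    ⟨Fintype.card V, Finset.univ, Finset.card_univ,
      fun v => SimpleGraph.Observed.mem v (by simp)⟩
  obtain ⟨S0, hS0card, hS0⟩ := Nat.sInf_mem hnonempty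
  have hne0 : Gᶜ.powerDomNum ≠ 0 := by
    intro h0
    have hcard0 : S0.card = 0 := by rw [hS0card]; exact h0
    have hS0e : S0 = ∅ := Finset.card_eq_zero.mp hcard0
    rw [hS0e] at hS0
    exact pd_obs_empty_false (by simpa using hS0 v0)
  omega

end PDPart2

section PDPart1

variable {V : Type*}

set_option maxHeartbeats 1000000 in
private lemma pd_part1 [Fintype V] (G : SimpleGraph V)
    (hGc : ∀ c : Gᶜ.ConnectedComponent, 3 ≤ c.supp.ncard)
    (hpd : 3 * G.powerDomNum = Fintype.card V) : Gᶜ.powerDomNum ≤ 2 := by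
  classical
  by_contra hgt
  push_neg at hgt
  have hno : ∀ S : Finset V, S.card ≤ 2 → ¬ Gᶜ.IsPowerDominating ↑S := by
    intro S hScard hSpds
    have hle : Gᶜ.powerDomNum ≤ S.card := Nat.sInf_le ⟨S, rfl, hSpds⟩
    omega
  have hVne : Nonempty V := by
    by_contra hV
    rw [not_nonempty_iff] at hV
    exact hno ∅ (by simp) (fun v => isEmptyElim v)
  obtain ⟨vstar⟩ := hVne
  haveI : Nonempty V := ⟨vstar⟩
  set k := G.powerDomNum with hk
  have hcard : Fintype.card V = 3 * k := hpd.symm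
  have hk1 : 1 ≤ k := by
    have : 0 < Fintype.card V := Fintype.card_pos
    omega
  have hiso : ∀ v : V, ∃ x, Gᶜ.Adj v x := by
    intro v
    have h3 := hGc (Gᶜ.connectedComponentMk v)
    obtain ⟨w, hw, hwv⟩ := Set.exists_ne_of_one_lt_ncard
      (s := (Gᶜ.connectedComponentMk v).supp) (by omega) v
    rw [SimpleGraph.ConnectedComponent.mem_supp_iff] at hw
    exact exists_adj_of_reachable_ne
      ((SimpleGraph.ConnectedComponent.eq.mp hw).symm) (Ne.symm hwv)
  -- Case: G disconnected
  by_cases hGpre : G.Preconnected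
  swap
  · rw [SimpleGraph.Preconnected] at hGpre
    push_neg at hGpre
    obtain ⟨u, v, huv⟩ := hGpre
    have hne : u ≠ v := fun h => huv (h ▸ SimpleGraph.Reachable.refl u)
    refine hno {u, v} ((Finset.card_insert_le _ _).trans (by simp)) ?_
    apply pds_of_dominating
    intro w
    by_cases hwu : w = u
    · exact Or.inl (by simp [hwu])
    by_cases hwv : w = v
    · exact Or.inl (by simp [hwv])
    right
    by_cases h1 : G.Adj u w
    · have h2 : ¬ G.Adj v w := fun h => huv (h1.reachable.trans h.reachable.symm)
      exact ⟨v, by simp, (G.compl_adj v w).mpr ⟨Ne.symm hwv, h2⟩⟩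
    · exact ⟨u, by simp, (G.compl_adj u w).mpr ⟨Ne.symm hwu, h1⟩⟩
  -- Case: Gᶜ disconnected
  by_cases hGcpre : Gᶜ.Preconnected
  swap
  · rw [SimpleGraph.Preconnected] at hGcpre
    push_neg at hGcpre
    obtain ⟨v1, v2, hv12⟩ := hGcpre
    have hne12 : v1 ≠ v2 := fun h => hv12 (h ▸ SimpleGraph.Reachable.refl v1)
    have hdomG : ∀ w : V, w ∈ ({v1, v2} : Finset V) ∨
        ∃ x ∈ ({v1, v2} : Finset V), G.Adj x w := by
      intro w
      by_cases hw1 : w = v1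
      · exact Or.inl (by simp [hw1])
      by_cases hw2 : w = v2
      · exact Or.inl (by simp [hw2])
      right
      by_cases h1 : G.Adj v1 w
      · exact ⟨v1, by simp, h1⟩
      by_cases h2 : G.Adj v2 w
      · exact ⟨v2, by simp, h2⟩
      exfalso
      have hc1 : Gᶜ.Adj v1 w := (G.compl_adj v1 w).mpr ⟨Ne.symm hw1, h1⟩
      have hc2 : Gᶜ.Adj v2 w := (G.compl_adj v2 w).mpr ⟨Ne.symm hw2, h2⟩
      exact hv12 (hc1.reachable.trans hc2.reachable.symm)
    have hkle2 : k ≤ 2 := by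
      have hpds := pds_of_dominating (G := G) {v1, v2} hdomG
      have hle : G.powerDomNum ≤ ({v1, v2} : Finset V).card := Nat.sInf_le ⟨_, rfl, hpds⟩
      have hc := Finset.card_insert_le v1 ({v2} : Finset V)
      simp only [Finset.card_singleton] at hc
      omega
    have hdisj : ∀ (a b : Gᶜ.ConnectedComponent), a ≠ b → Disjoint a.supp b.supp := by
      intro a b hab
      rw [Set.disjoint_left]
      intro x hxa hxb
      rw [SimpleGraph.ConnectedComponent.mem_supp_iff] at hxa hxb
      exact hab (by rw [← hxa, hxb])
    have hucard : ∀ (a b : Gᶜ.ConnectedComponent), a ≠ b →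
        (a.supp ∪ b.supp).ncard = a.supp.ncard + b.supp.ncard := fun a b hab =>
      Set.ncard_union_eq (hdisj a b hab) (Set.toFinite _) (Set.toFinite _)
    have hle_univ : ∀ s : Set V, s.ncard ≤ 3 * k := by
      intro s
      calc s.ncard ≤ (Set.univ : Set V).ncard :=
            Set.ncard_le_ncard (Set.subset_univ _) (Set.toFinite _)
        _ = 3 * k := by rw [Set.ncard_univ, Nat.card_eq_fintype_card, hcard]
    set c1 := Gᶜ.connectedComponentMk v1 with hc1
    set c2 := Gᶜ.connectedComponentMk v2 with hc2
    have hc12 : c1 ≠ c2 := fun h => hv12 (SimpleGraph.ConnectedComponent.eq.mp h)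
    have hkeq : k = 2 := by
      have h1 := hGc c1
      have h2 := hGc c2
      have h3 := hle_univ (c1.supp ∪ c2.supp)
      rw [hucard c1 c2 hc12] at h3
      omega
    have hsupp3 : ∀ v : V, ((Gᶜ.connectedComponentMk v).supp).ncard ≤ 3 := by
      intro v
      have hex : ∃ c' : Gᶜ.ConnectedComponent, c' ≠ Gᶜ.connectedComponentMk v := by
        by_cases h : c1 = Gᶜ.connectedComponentMk v
        · exact ⟨c2, fun hcon => hc12 (by rw [h, hcon])⟩
        · exact ⟨c1, h⟩
      obtain ⟨c', hc'⟩ := hex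
      have hu := hucard (Gᶜ.connectedComponentMk v) c' (Ne.symm hc')
      have h3 := hle_univ ((Gᶜ.connectedComponentMk v).supp ∪ c'.supp)
      rw [hu] at h3
      have := hGc c'
      omega
    have hdeg2 : ∀ v : V, ((Gᶜ).neighborSet v).ncard ≤ 2 := by
      intro v
      have hsub : (Gᶜ).neighborSet v ⊆ (Gᶜ.connectedComponentMk v).supp \ {v} := by
        intro x hx
        have hadj : Gᶜ.Adj v x := hx
        constructor
        · rw [SimpleGraph.ConnectedComponent.mem_supp_iff]
          exact SimpleGraph.ConnectedComponent.sound hadj.reachable.symm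
        · simp only [Set.mem_singleton_iff]
          exact hadj.ne'
      calc ((Gᶜ).neighborSet v).ncard
          ≤ ((Gᶜ.connectedComponentMk v).supp \ {v}).ncard :=
            Set.ncard_le_ncard hsub (Set.toFinite _)
        _ = (Gᶜ.connectedComponentMk v).supp.ncard - 1 :=
            Set.ncard_diff_singleton_of_mem
              ((SimpleGraph.ConnectedComponent.mem_supp_iff _ _).mpr rfl)
        _ ≤ 2 := by have := hsupp3 v; omega
    have hcover : ∀ w : V, Gᶜ.Reachable v1 w ∨ Gᶜ.Reachable v2 w := by
      intro w
      by_contra hcon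
      push_neg at hcon
      have hd1 : Gᶜ.connectedComponentMk w ≠ c1 := fun h =>
        hcon.1 (SimpleGraph.ConnectedComponent.eq.mp h.symm)
      have hd2 : Gᶜ.connectedComponentMk w ≠ c2 := fun h =>
        hcon.2 (SimpleGraph.ConnectedComponent.eq.mp h.symm)
      have hu1 := hucard c1 c2 hc12
      have hdisj2 : Disjoint ((Gᶜ.connectedComponentMk w).supp) (c1.supp ∪ c2.supp) :=
        Set.disjoint_union_right.mpr ⟨hdisj _ _ hd1, hdisj _ _ hd2⟩
      have hu2 := Set.ncard_union_eq hdisj2 (Set.toFinite _) (Set.toFinite _)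
      have h3 := hle_univ ((Gᶜ.connectedComponentMk w).supp ∪ (c1.supp ∪ c2.supp))
      rw [hu2, hu1] at h3
      have hg1 := hGc (Gᶜ.connectedComponentMk w)
      have hg2 := hGc c1
      have hg3 := hGc c2
      omega
    refine hno {v1, v2} ((Finset.card_insert_le _ _).trans (by simp)) ?_
    intro w
    rcases hcover w with h | h
    · exact maxdeg2_observed hdeg2 (v0 := v1) (by simp) (Gᶜ.dist v1 w) w h rfl
    · exact maxdeg2_observed hdeg2 (v0 := v2) (by simp) (Gᶜ.dist v2 w) w h rfl
  -- Main case : both connected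
  have hCN : ∀ u z : V, z ≠ u → 2 ≤ (G.neighborFinset z ∩ G.neighborFinset u).card := by
    intro u z hzu
    have hnpd := hno {u, z} ((Finset.card_insert_le _ _).trans (by simp))
    rw [SimpleGraph.IsPowerDominating] at hnpd
    push_neg at hnpd
    obtain ⟨v₀, hv₀⟩ := hnpd
    have hfact : ∀ w : V, ¬ Gᶜ.Observed (↑({u, z} : Finset V)) w →
        G.Adj u w ∧ G.Adj z w := by
      intro w hw
      have hwu : w ≠ u := by rintro rfl; exact hw (SimpleGraph.Observed.mem w (by simp))
      have hwz : w ≠ z := by rintro rfl; exact hw (SimpleGraph.Observed.mem w (by simp))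
      constructor
      · by_contra hna
        exact hw (SimpleGraph.Observed.dominate u (by simp) w
          ((G.compl_adj u w).mpr ⟨Ne.symm hwu, hna⟩))
      · by_contra hna
        exact hw (SimpleGraph.Observed.dominate z (by simp) w
          ((G.compl_adj z w).mpr ⟨Ne.symm hwz, hna⟩))
    have hsnd : ∃ w₂, ¬ Gᶜ.Observed (↑({u, z} : Finset V)) w₂ ∧ w₂ ≠ v₀ := by
      by_contra hcon
      push_neg at hcon
      obtain ⟨x, hxadj⟩ := hiso v₀
      have hxobs : Gᶜ.Observed (↑({u, z} : Finset V)) x := by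
        by_contra hxo
        exact hxadj.ne' (hcon x hxo)
      exact hv₀ (SimpleGraph.Observed.force x v₀ hxobs hxadj.symm
        (fun y hy hyne => by
          by_contra hyo
          exact hyne (hcon y hyo)))
    obtain ⟨w₂, hw₂, hne₂⟩ := hsnd
    have f1 := hfact v₀ hv₀
    have f2 := hfact w₂ hw₂
    refine Finset.one_lt_card.mpr ⟨v₀, ?_, w₂, ?_, hne₂.symm⟩ <;>
      simp only [Finset.mem_inter, SimpleGraph.mem_neighborFinset]
    · exact ⟨f1.2, f1.1⟩
    · exact ⟨f2.2, f2.1⟩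
  -- Case: all complement degrees at most 2
  by_cases hmax : ∀ v : V, ((Gᶜ).neighborSet v).ncard ≤ 2
  · refine hno {vstar} (by simp) ?_
    intro w
    exact maxdeg2_observed hmax (v0 := vstar) (by simp) (Gᶜ.dist vstar w) w
      (hGcpre vstar w) rfl
  push_neg at hmax
  obtain ⟨vbar, hvbar⟩ := hmax
  have hdegsum : ∀ v : V, (G.neighborFinset v).card + ((Gᶜ).neighborSet v).ncard + 1 = 3 * k := by
    intro v
    have hu : G.neighborSet v ∪ (Gᶜ).neighborSet v = {v}ᶜ :=
      G.neighborSet_union_compl_neighborSet_eq v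
    have hdisjv : Disjoint (G.neighborSet v) ((Gᶜ).neighborSet v) :=
      G.compl_neighborSet_disjoint v
    have h1 : (G.neighborSet v ∪ (Gᶜ).neighborSet v).ncard
        = (G.neighborSet v).ncard + ((Gᶜ).neighborSet v).ncard :=
      Set.ncard_union_eq hdisjv (Set.toFinite _) (Set.toFinite _)
    have h2 : ({v}ᶜ : Set V).ncard + 1 = 3 * k := by
      rw [Set.compl_eq_univ_diff,
        Set.ncard_diff_singleton_of_mem (Set.mem_univ v),
        Set.ncard_univ, Nat.card_eq_fintype_card, hcard]
      omega
    have h3 : (G.neighborSet v).ncard = (G.neighborFinset v).card := by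
      rw [SimpleGraph.neighborFinset_def, Set.ncard_eq_toFinset_card']
    have h4 : (G.neighborFinset v).card + ((Gᶜ).neighborSet v).ncard = ({v}ᶜ : Set V).ncard := by
      rw [← hu, h1, h3]
    omega
  obtain ⟨u, -, humin⟩ := Finset.exists_min_image Finset.univ
    (fun v => (G.neighborFinset v).card) ⟨vstar, Finset.mem_univ _⟩
  set δ := (G.neighborFinset u).card with hδ
  have hmin : ∀ v : V, δ ≤ (G.neighborFinset v).card := fun v => humin v (Finset.mem_univ v)
  have hδub : δ + 4 ≤ 3 * k := by
    have h1 := hdegsum vbar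
    have h2 := hmin vbar
    omega
  have hk2 : 2 ≤ k := by omega
  have hδ2 : 2 ≤ δ := by
    have hntV : Nontrivial V := Fintype.one_lt_card_iff_nontrivial.mp (by omega)
    obtain ⟨z, hz⟩ := exists_ne u
    have h1 := hCN u z hz
    have h2 := Finset.card_le_card
      (Finset.inter_subset_right (s₁ := G.neighborFinset z) (s₂ := G.neighborFinset u))
    omega
  -- Branch (b): δ ≤ k
  by_cases hb : δ ≤ k
  · have hne : (G.neighborFinset u).Nonempty := Finset.card_pos.mp (by omega)
    obtain ⟨x0, hx0⟩ := hne
    have hXsub : ({x0} : Finset V) ⊆ G.neighborFinset u := Finset.singleton_subset_iff.mpr hx0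
    have hDcard : (G.neighborFinset u \ {x0}).card = δ - 1 := by
      rw [Finset.card_sdiff_of_subset hXsub, Finset.card_singleton]
    have hDne : (G.neighborFinset u \ {x0}).Nonempty := Finset.card_pos.mp (by omega)
    have hW : ∀ z z' : V,
        (z ≠ u ∧ z ∉ G.neighborFinset u \ {x0} ∧
          G.neighborFinset z ∩ G.neighborFinset u ⊆ {x0}) →
        (z' ≠ u ∧ z' ∉ G.neighborFinset u \ {x0} ∧
          G.neighborFinset z' ∩ G.neighborFinset u ⊆ {x0}) → z = z' := by
      intro z z' hz _
      exfalso
      have h1 := hCN u z hz.1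
      have h2 := Finset.card_le_card hz.2.2
      simp only [Finset.card_singleton] at h2
      omega
    have hpds := pds_construct u {x0} hXsub hDne (fun z hz => hCN u z hz) hW
    have hle : G.powerDomNum ≤ (G.neighborFinset u \ {x0}).card :=
      Nat.sInf_le ⟨_, rfl, hpds⟩
    omega
  -- Branch (c): δ = k + 1
  by_cases hc : δ = k + 1
  · have hRcard : (Finset.univ \ insert u (G.neighborFinset u)).card = 2 * k - 2 := by
      rw [Finset.card_sdiff_of_subset (Finset.subset_univ _), Finset.card_univ, hcard,
        Finset.card_insert_of_notMem (by simp)]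
      omega
    have hP2card : ((G.neighborFinset u).powersetCard 2).card = (k+1).choose 2 := by
      rw [Finset.card_powersetCard, show (G.neighborFinset u).card = k + 1 by omega]
    have hchoose : 2 * k - 1 ≤ (k+1).choose 2 := by
      have h := pd_ck2 (k - 1)
      rw [show k - 1 + 2 = k + 1 by omega] at h
      omega
    have hEX : ∃ X ∈ (G.neighborFinset u).powersetCard 2,
        X ∉ ((Finset.univ \ insert u (G.neighborFinset u)).filter
          (fun z => (G.neighborFinset z ∩ G.neighborFinset u).card = 2)).image
          (fun z => G.neighborFinset z ∩ G.neighborFinset u) := by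
      by_contra hcon
      push_neg at hcon
      have hsub : (G.neighborFinset u).powersetCard 2 ⊆ _ := hcon
      have hcc := Finset.card_le_card hsub
      have hI : (((Finset.univ \ insert u (G.neighborFinset u)).filter
          (fun z => (G.neighborFinset z ∩ G.neighborFinset u).card = 2)).image
          (fun z => G.neighborFinset z ∩ G.neighborFinset u)).card
          ≤ (Finset.univ \ insert u (G.neighborFinset u)).card :=
        le_trans Finset.card_image_le (Finset.card_filter_le _ _)
      omega
    obtain ⟨X, hXmem, hXI⟩ := hEX
    rw [Finset.mem_powersetCard] at hXmem
    obtain ⟨hXsub, hX2⟩ := hXmem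
    have hWf : ∀ z : V, (z ≠ u ∧ z ∉ G.neighborFinset u \ X ∧
        G.neighborFinset z ∩ G.neighborFinset u ⊆ X) → False := by
      rintro z ⟨hz1, hz2, hz3⟩
      have hcz := hCN u z hz1
      have hczX : G.neighborFinset z ∩ G.neighborFinset u = X := by
        apply Finset.eq_of_subset_of_card_le hz3
        omega
      by_cases hzN : z ∈ G.neighborFinset u
      · have hzX : z ∈ X := by
          by_contra h
          exact hz2 (Finset.mem_sdiff.mpr ⟨hzN, h⟩)
        rw [← hczX] at hzX
        have hmem := (Finset.mem_inter.mp hzX).1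
        rw [SimpleGraph.mem_neighborFinset] at hmem
        exact G.irrefl hmem
      · have hzR : z ∈ Finset.univ \ insert u (G.neighborFinset u) := by
          simp only [Finset.mem_sdiff, Finset.mem_univ, Finset.mem_insert, true_and]
          push_neg
          exact ⟨hz1, hzN⟩
        apply hXI
        rw [← hczX]
        apply Finset.mem_image_of_mem
        rw [Finset.mem_filter]
        exact ⟨hzR, by rw [hczX, hX2]⟩
    have hDcard : (G.neighborFinset u \ X).card = k - 1 := by
      rw [Finset.card_sdiff_of_subset hXsub, hX2]
      omega
    have hDne : (G.neighborFinset u \ X).Nonempty := Finset.card_pos.mp (by omega)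
    have hpds := pds_construct u X hXsub hDne (fun z hz => hCN u z hz)
      (fun z z' h _ => (hWf z h).elim)
    have hle : G.powerDomNum ≤ (G.neighborFinset u \ X).card :=
      Nat.sInf_le ⟨_, rfl, hpds⟩
    omega
  -- Branch (d): δ = k + 2
  by_cases hd : δ = k + 2
  · have hk3 : 3 ≤ k := by omega
    have hNFcard : (G.neighborFinset u).card = k + 2 := by omega
    have hRcard : (Finset.univ \ insert u (G.neighborFinset u)).card = 2 * k - 3 := by
      rw [Finset.card_sdiff_of_subset (Finset.subset_univ _), Finset.card_univ, hcard,
        Finset.card_insert_of_notMem (by simp)]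
      omega
    have hP3card : ((G.neighborFinset u).powersetCard 3).card = (k+2).choose 3 := by
      rw [Finset.card_powersetCard, hNFcard]
    have hEX : ∃ X ∈ (G.neighborFinset u).powersetCard 3, ∀ z z' : V,
        (z ≠ u ∧ z ∉ G.neighborFinset u \ X ∧
          G.neighborFinset z ∩ G.neighborFinset u ⊆ X) →
        (z' ≠ u ∧ z' ∉ G.neighborFinset u \ X ∧
          G.neighborFinset z' ∩ G.neighborFinset u ⊆ X) → z = z' := by
      by_contra hcon
      push_neg at hcon
      have h2 : ∀ X ∈ (G.neighborFinset u).powersetCard 3,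
          2 ≤ (Finset.univ.filter (fun z : V => z ≠ u ∧ z ∉ G.neighborFinset u \ X ∧
            G.neighborFinset z ∩ G.neighborFinset u ⊆ X)).card := by
        intro X hX
        obtain ⟨z, z', hz, hz', hne⟩ := hcon X hX
        refine Finset.one_lt_card.mpr ⟨z, ?_, z', ?_, hne⟩ <;>
          simp only [Finset.mem_filter, Finset.mem_univ, true_and]
        · exact hz
        · exact hz'
      have hsum1 : 2 * ((G.neighborFinset u).powersetCard 3).card ≤
          ∑ X ∈ (G.neighborFinset u).powersetCard 3,
            (Finset.univ.filter (fun z : V => z ≠ u ∧ z ∉ G.neighborFinset u \ X ∧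
              G.neighborFinset z ∩ G.neighborFinset u ⊆ X)).card := by
        have h := Finset.card_nsmul_le_sum ((G.neighborFinset u).powersetCard 3) _ 2 h2
        rw [smul_eq_mul] at h
        omega
      have hswap : ∑ X ∈ (G.neighborFinset u).powersetCard 3,
            (Finset.univ.filter (fun z : V => z ≠ u ∧ z ∉ G.neighborFinset u \ X ∧
              G.neighborFinset z ∩ G.neighborFinset u ⊆ X)).card
          = ∑ z ∈ Finset.univ,
            (((G.neighborFinset u).powersetCard 3).filter
              (fun X => z ≠ u ∧ z ∉ G.neighborFinset u \ X ∧
                G.neighborFinset z ∩ G.neighborFinset u ⊆ X)).card := by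
        simp only [Finset.card_filter]
        rw [Finset.sum_comm]
      have hbound_nf : ∀ z ∈ G.neighborFinset u,
          (((G.neighborFinset u).powersetCard 3).filter
            (fun X => z ≠ u ∧ z ∉ G.neighborFinset u \ X ∧
              G.neighborFinset z ∩ G.neighborFinset u ⊆ X)).card ≤ 1 := by
        intro z hzN
        have hzu : z ≠ u := by
          rintro rfl
          rw [SimpleGraph.mem_neighborFinset] at hzN
          exact G.irrefl hzN
        have hsub : ((G.neighborFinset u).powersetCard 3).filter
              (fun X => z ≠ u ∧ z ∉ G.neighborFinset u \ X ∧
                G.neighborFinset z ∩ G.neighborFinset u ⊆ X)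
            ⊆ ((G.neighborFinset u).powersetCard 3).filter
              (fun X => z ∈ X ∧ G.neighborFinset z ∩ G.neighborFinset u ⊆ X) := by
          intro X hX
          rw [Finset.mem_filter] at hX ⊢
          refine ⟨hX.1, ?_, hX.2.2.2⟩
          by_contra h
          exact hX.2.2.1 (Finset.mem_sdiff.mpr ⟨hzN, h⟩)
        refine le_trans (Finset.card_le_card hsub) ?_
        apply pd_card_filter_mem_le_one
        · intro h
          have hmem := (Finset.mem_inter.mp h).1
          rw [SimpleGraph.mem_neighborFinset] at hmem
          exact G.irrefl hmem
        · exact hCN u z hzu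
      have hbound_r : ∀ z ∈ Finset.univ \ insert u (G.neighborFinset u),
          (((G.neighborFinset u).powersetCard 3).filter
            (fun X => z ≠ u ∧ z ∉ G.neighborFinset u \ X ∧
              G.neighborFinset z ∩ G.neighborFinset u ⊆ X)).card ≤ k + 1 := by
        intro z hzR
        simp only [Finset.mem_sdiff, Finset.mem_univ, Finset.mem_insert, true_and] at hzR
        push_neg at hzR
        have hzu : z ≠ u := hzR.1
        have hsub : ((G.neighborFinset u).powersetCard 3).filter
              (fun X => z ≠ u ∧ z ∉ G.neighborFinset u \ X ∧
                G.neighborFinset z ∩ G.neighborFinset u ⊆ X)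
            ⊆ ((G.neighborFinset u).powersetCard 3).filter
              (fun X => G.neighborFinset z ∩ G.neighborFinset u ⊆ X) := by
          intro X hX
          rw [Finset.mem_filter] at hX ⊢
          exact ⟨hX.1, hX.2.2.2⟩
        have hb := pd_card_supersets_le (G.neighborFinset u)
          (G.neighborFinset z ∩ G.neighborFinset u)
          Finset.inter_subset_right (hCN u z hzu)
        have hcc := Finset.card_le_card hsub
        have hcz := hCN u z hzu
        omega
      have hsplit : ∑ z ∈ Finset.univ,
            (((G.neighborFinset u).powersetCard 3).filter
              (fun X => z ≠ u ∧ z ∉ G.neighborFinset u \ X ∧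
                G.neighborFinset z ∩ G.neighborFinset u ⊆ X)).card
          = (∑ z ∈ Finset.univ \ insert u (G.neighborFinset u),
              (((G.neighborFinset u).powersetCard 3).filter
                (fun X => z ≠ u ∧ z ∉ G.neighborFinset u \ X ∧
                  G.neighborFinset z ∩ G.neighborFinset u ⊆ X)).card)
            + ∑ z ∈ insert u (G.neighborFinset u),
              (((G.neighborFinset u).powersetCard 3).filter
                (fun X => z ≠ u ∧ z ∉ G.neighborFinset u \ X ∧
                  G.neighborFinset z ∩ G.neighborFinset u ⊆ X)).card :=
        (Finset.sum_sdiff (Finset.subset_univ _)).symm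
      have hins : ∑ z ∈ insert u (G.neighborFinset u),
            (((G.neighborFinset u).powersetCard 3).filter
              (fun X => z ≠ u ∧ z ∉ G.neighborFinset u \ X ∧
                G.neighborFinset z ∩ G.neighborFinset u ⊆ X)).card
          = (((G.neighborFinset u).powersetCard 3).filter
              (fun X => u ≠ u ∧ u ∉ G.neighborFinset u \ X ∧
                G.neighborFinset u ∩ G.neighborFinset u ⊆ X)).card
            + ∑ z ∈ G.neighborFinset u,
              (((G.neighborFinset u).powersetCard 3).filter
                (fun X => z ≠ u ∧ z ∉ G.neighborFinset u \ X ∧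
                  G.neighborFinset z ∩ G.neighborFinset u ⊆ X)).card :=
        Finset.sum_insert (by simp)
      have hgu : (((G.neighborFinset u).powersetCard 3).filter
          (fun X => u ≠ u ∧ u ∉ G.neighborFinset u \ X ∧
            G.neighborFinset u ∩ G.neighborFinset u ⊆ X)).card = 0 := by
        rw [Finset.card_eq_zero, Finset.filter_eq_empty_iff]
        intro X _
        simp
      have hsum_nf : ∑ z ∈ G.neighborFinset u,
            (((G.neighborFinset u).powersetCard 3).filter
              (fun X => z ≠ u ∧ z ∉ G.neighborFinset u \ X ∧
                G.neighborFinset z ∩ G.neighborFinset u ⊆ X)).card ≤ k + 2 := by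
        have h := Finset.sum_le_card_nsmul (G.neighborFinset u) _ 1 hbound_nf
        rw [smul_eq_mul, hNFcard] at h
        omega
      have hsum_r : ∑ z ∈ Finset.univ \ insert u (G.neighborFinset u),
            (((G.neighborFinset u).powersetCard 3).filter
              (fun X => z ≠ u ∧ z ∉ G.neighborFinset u \ X ∧
                G.neighborFinset z ∩ G.neighborFinset u ⊆ X)).card
          ≤ (Finset.univ \ insert u (G.neighborFinset u)).card * (k + 1) := by
        have h := Finset.sum_le_card_nsmul (Finset.univ \ insert u (G.neighborFinset u))
          _ (k+1) hbound_r
        rw [smul_eq_mul] at h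
        exact h
      have htot : 2 * ((k+2).choose 3)
          ≤ (Finset.univ \ insert u (G.neighborFinset u)).card * (k + 1) + (k + 2) := by
        rw [← hP3card]
        calc 2 * ((G.neighborFinset u).powersetCard 3).card
            ≤ _ := hsum1
          _ = _ := hswap
          _ = _ := hsplit
          _ = _ + (0 + _) := by rw [hins, hgu]
          _ ≤ (Finset.univ \ insert u (G.neighborFinset u)).card * (k + 1) + (k + 2) := by
              rw [zero_add]
              exact add_le_add hsum_r hsum_nf
      have hck := pd_ck3 k
      have hRc : (Finset.univ \ insert u (G.neighborFinset u)).card + 3 = 2 * k := by omega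
      have hexp : (Finset.univ \ insert u (G.neighborFinset u)).card * (k+1) + 3 * (k+1)
          = 2 * k * (k+1) := by
        calc (Finset.univ \ insert u (G.neighborFinset u)).card * (k+1) + 3 * (k+1)
            = ((Finset.univ \ insert u (G.neighborFinset u)).card + 3) * (k+1) := by ring
          _ = 2 * k * (k+1) := by rw [hRc]
      have h2k : 2 * k * (k+1) = 2 * (k*k) + 2 * k := by ring
      linarith
    obtain ⟨X, hXmem, hW⟩ := hEX
    rw [Finset.mem_powersetCard] at hXmem
    obtain ⟨hXsub, hX3⟩ := hXmem
    have hDcard : (G.neighborFinset u \ X).card = k - 1 := by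
      rw [Finset.card_sdiff_of_subset hXsub, hX3]
      omega
    have hDne : (G.neighborFinset u \ X).Nonempty := Finset.card_pos.mp (by omega)
    have hpds := pds_construct u X hXsub hDne (fun z hz => hCN u z hz) hW
    have hle : G.powerDomNum ≤ (G.neighborFinset u \ X).card :=
      Nat.sInf_le ⟨_, rfl, hpds⟩
    omega
  -- Branch (e): k + 3 ≤ δ  (and δ ≤ 3k - 4)
  have he : k + 3 ≤ δ := by omega
  have hdeg' : ∀ v, k + 3 ≤ (G.neighborFinset v).card := fun v => le_trans he (hmin v)
  have hk4 : 4 ≤ k := by omega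
  have hdomS : ∃ S : Finset V, S.card ≤ k - 1 ∧
      ∀ v ∈ Finset.univ, v ∈ S ∨ ∃ x ∈ S, G.Adj x v := by
    by_cases hke4 : k = 4
    · refine greedy_dom (by omega) hcard hdeg' pdB4 rfl ?_ (k-1) Finset.univ ?_
      · intro s m cov h1 h2 h3
        rw [hke4] at h3
        match s with
        | 0 =>
          have e1 : pdB4 (0+1) = 1 := rfl
          have e0 : pdB4 0 = 0 := rfl
          omega
        | 1 =>
          have e1 : pdB4 (1+1) = 4 := rfl
          have e0 : pdB4 1 = 1 := rfl
          omega
        | 2 =>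
          have e1 : pdB4 (2+1) = 12 := rfl
          have e0 : pdB4 2 = 4 := rfl
          omega
        | n+3 =>
          have e1 : pdB4 (n+3+1) = 12 := rfl
          have e0 : pdB4 (n+3) = 12 := rfl
          omega
      · rw [Finset.card_univ, hcard, hke4]
        decide
    by_cases hke5 : k = 5
    · refine greedy_dom (by omega) hcard hdeg' pdB5 rfl ?_ (k-1) Finset.univ ?_
      · intro s m cov h1 h2 h3
        rw [hke5] at h3
        match s with
        | 0 =>
          have e1 : pdB5 (0+1) = 2 := rfl
          have e0 : pdB5 0 = 0 := rfl
          omega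
        | 1 =>
          have e1 : pdB5 (1+1) = 6 := rfl
          have e0 : pdB5 1 = 2 := rfl
          omega
        | 2 =>
          have e1 : pdB5 (2+1) = 15 := rfl
          have e0 : pdB5 2 = 6 := rfl
          omega
        | n+3 =>
          have e1 : pdB5 (n+3+1) = 15 := rfl
          have e0 : pdB5 (n+3) = 15 := rfl
          omega
      · rw [Finset.card_univ, hcard, hke5]
        decide
    by_cases hke6 : k = 6
    · refine greedy_dom (by omega) hcard hdeg' pdB6 rfl ?_ (k-1) Finset.univ ?_
      · intro s m cov h1 h2 h3
        rw [hke6] at h3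
        match s with
        | 0 =>
          have e1 : pdB6 (0+1) = 1 := rfl
          have e0 : pdB6 0 = 0 := rfl
          omega
        | 1 =>
          have e1 : pdB6 (1+1) = 3 := rfl
          have e0 : pdB6 1 = 1 := rfl
          omega
        | 2 =>
          have e1 : pdB6 (2+1) = 8 := rfl
          have e0 : pdB6 2 = 3 := rfl
          omega
        | 3 =>
          have e1 : pdB6 (3+1) = 18 := rfl
          have e0 : pdB6 3 = 8 := rfl
          omega
        | n+4 =>
          have e1 : pdB6 (n+4+1) = 18 := rfl
          have e0 : pdB6 (n+4) = 18 := rfl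
          omega
      · rw [Finset.card_univ, hcard, hke6]
        decide
    by_cases hke7 : k = 7
    · refine greedy_dom (by omega) hcard hdeg' pdB7 rfl ?_ (k-1) Finset.univ ?_
      · intro s m cov h1 h2 h3
        rw [hke7] at h3
        match s with
        | 0 =>
          have e1 : pdB7 (0+1) = 1 := rfl
          have e0 : pdB7 0 = 0 := rfl
          omega
        | 1 =>
          have e1 : pdB7 (1+1) = 4 := rfl
          have e0 : pdB7 1 = 1 := rfl
          omega
        | 2 =>
          have e1 : pdB7 (2+1) = 10 := rfl
          have e0 : pdB7 2 = 4 := rfl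
          omega
        | 3 =>
          have e1 : pdB7 (3+1) = 21 := rfl
          have e0 : pdB7 3 = 10 := rfl
          omega
        | n+4 =>
          have e1 : pdB7 (n+4+1) = 21 := rfl
          have e0 : pdB7 (n+4) = 21 := rfl
          omega
      · rw [Finset.card_univ, hcard, hke7]
        decide
    -- k ≥ 8 : uniform bound
    have hk8 : 8 ≤ k := by omega
    refine greedy_dom (by omega) hcard hdeg' pdBu rfl ?_ (k-1) Finset.univ ?_
    · intro s m cov h1 h2 h3
      have h4 : m + 1 ≤ 3 * cov := by
        by_contra hcc
        push_neg at hcc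
        have h5 : k * (3 * cov) ≤ k * m := Nat.mul_le_mul_left k (by omega)
        have h6 : k * m + 4 * m ≤ k * m + 0 := by
          calc k * m + 4 * m = (k+4) * m := by ring
            _ ≤ 3 * k * cov := h3
            _ = k * (3 * cov) := by ring
            _ ≤ k * m := h5
            _ = k * m + 0 := by rw [Nat.add_zero]
        have h7 := Nat.le_of_add_le_add_left h6
        omega
      have h8 : pdBu (s+1) = 3 * pdBu s / 2 + 1 := rfl
      omega
    · rw [Finset.card_univ, hcard]
      have h := pdBu_ge (k - 8)
      rw [show 7 + (k-8) = k - 1 by omega] at h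
      omega
  obtain ⟨S, hScard, hSdom⟩ := hdomS
  have hpds := pds_of_dominating (G := G) S (fun v => hSdom v (Finset.mem_univ v))
  have hle : G.powerDomNum ≤ S.card := Nat.sInf_le ⟨S, rfl, hpds⟩
  omega

end PDPart1

theorem powerDomNum_compl_le_two_of_extremal {V : Type*} [Fintype V] (G : SimpleGraph V)
    (hG : ∀ c : G.ConnectedComponent, 3 ≤ c.supp.ncard)
    (hGc : ∀ c : Gᶜ.ConnectedComponent, 3 ≤ c.supp.ncard)
    (hpd : 3 * G.powerDomNum = Fintype.card V) :
    Gᶜ.powerDomNum ≤ 2 ∧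
    ((∃ c : G.ConnectedComponent, 6 ≤ c.supp.ncard ∧ (G.induce c.supp).InFamilyT) →
      Gᶜ.powerDomNum = 1) := by
  constructor
  · exact pd_part1 G hGc hpd
  · rintro ⟨c, hc6, hT⟩
    exact pd_part2 G c hc6 hT
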